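/- Let N ≥ 1 and let x, x' : ZMod N → ℂ. Define y_j = |x_j|², z_k = |x̂[k]|² and similarly y', z' from x'. Assume ŷ[k] ≠ 0 and ẑ[k] ≠ 0 for all k ∈ ZMod N. If B^M(x')(i,j) = B^M(x)(i,j) and B^{FM}(x')(i,j) = B^{FM}(x)(i,j) for all i, j ∈ ZMod N, then there exist k₀, n₀ ∈ ZMod N such that |x'_j| = |x_{j+k₀}| for all j and |x̂'[k]| = |x̂[k+n₀]| for all k. That is, the Heisenberg bispectrum determines the magnitude vector and the Fourier-magnitude vector each up to a cyclic shift. -/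

import Mathlib

open ZMod

/-- The modulus bispectrum `B^M(x)(i,j) = ŷ[i]·ŷ[j]·ŷ[-i-j]` where `y_t = |x_t|²`. -/
noncomputable def modulusBispectrum {N : ℕ} [NeZero N] (x : ZMod N → ℂ) (i j : ZMod N) : ℂ :=
  dft (fun t => ((‖x t‖ : ℂ)) ^ 2) i *
    dft (fun t => ((‖x t‖ : ℂ)) ^ 2) j *
    dft (fun t => ((‖x t‖ : ℂ)) ^ 2) (-i - j)

/-- The Fourier-modulus bispectrum `B^{FM}(x)(i,j) = ẑ[i]·ẑ[j]·ẑ[-i-j]` where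
`z_t = |x̂[t]|²`. -/
noncomputable def fourierModulusBispectrum {N : ℕ} [NeZero N] (x : ZMod N → ℂ)
    (i j : ZMod N) : ℂ :=
  dft (fun t => ((‖dft x t‖ : ℂ)) ^ 2) i *
    dft (fun t => ((‖dft x t‖ : ℂ)) ^ 2) j *
    dft (fun t => ((‖dft x t‖ : ℂ)) ^ 2) (-i - j)

/-- Key lemma: a nonneg-real-valued function with everywhere nonvanishing DFT is determined
by its bispectrum up to cyclic shift. -/
theorem bispectrum_shift {N : ℕ} [NeZero N] (a a' : ZMod N → ℝ)
    (ha : ∀ j, 0 ≤ a j) (ha' : ∀ j, 0 ≤ a' j)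
    (hy : ∀ k : ZMod N, dft (fun t => ((a t : ℂ))) k ≠ 0)
    (hB : ∀ i j : ZMod N,
      dft (fun t => ((a' t : ℂ))) i * dft (fun t => ((a' t : ℂ))) j
        * dft (fun t => ((a' t : ℂ))) (-i - j)
      = dft (fun t => ((a t : ℂ))) i * dft (fun t => ((a t : ℂ))) j
        * dft (fun t => ((a t : ℂ))) (-i - j)) :
    ∃ k₀ : ZMod N, ∀ j : ZMod N, a' j = a (j + k₀) := by
  set y : ZMod N → ℂ := fun t => ((a t : ℂ)) with hydef
  set y' : ZMod N → ℂ := fun t => ((a' t : ℂ)) with hy'def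
  -- dft y' is nonvanishing
  have hy' : ∀ k, dft y' k ≠ 0 := by
    intro k
    have h := hB k k
    have hne : dft y k * dft y k * dft y (-k - k) ≠ 0 :=
      mul_ne_zero (mul_ne_zero (hy k) (hy k)) (hy _)
    rw [← h] at hne
    exact fun h0 => hne (by rw [h0]; ring)
  -- the ratio function
  set φ : ZMod N → ℂ := fun k => dft y' k / dft y k with hφdef
  have hφne : ∀ k, φ k ≠ 0 := fun k => div_ne_zero (hy' k) (hy k)
  have hφmul : ∀ i j, φ i * φ j * φ (-i - j) = 1 := by
    intro i j
    rw [hφdef]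
    simp only
    rw [div_mul_div_comm, div_mul_div_comm, hB i j]
    exact div_self (mul_ne_zero (mul_ne_zero (hy i) (hy j)) (hy _))
  -- φ 0 = 1
  have hφ0 : φ 0 = 1 := by
    have h3 : φ 0 ^ 3 = 1 := by
      have := hφmul 0 0
      simpa [pow_succ, pow_zero, mul_assoc] using this
    -- φ 0 is a nonneg real
    have hS : dft y 0 = ((∑ j, a j : ℝ) : ℂ) := by
      rw [dft_apply_zero]; push_cast [hydef]; rfl
    have hS' : dft y' 0 = ((∑ j, a' j : ℝ) : ℂ) := by
      rw [dft_apply_zero]; push_cast [hy'def]; rfl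
    have hr : ∃ r : ℝ, 0 ≤ r ∧ φ 0 = (r : ℂ) := by
      refine ⟨(∑ j, a' j) / (∑ j, a j), ?_, ?_⟩
      · exact div_nonneg (Finset.sum_nonneg fun j _ => ha' j)
          (Finset.sum_nonneg fun j _ => ha j)
      · rw [hφdef]; simp only [hS, hS']; push_cast; ring_nf
    obtain ⟨r, hr0, hre⟩ := hr
    rw [hre] at h3 ⊢
    norm_cast at h3 ⊢
    nlinarith [sq_nonneg r, sq_nonneg (r - 1), sq_nonneg (r + 1)]
  -- φ is additive
  have hφadd : ∀ i j, φ (i + j) = φ i * φ j := by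
    intro i j
    have h1 := hφmul i j
    have h2 := hφmul (i + j) 0
    have h3 : -(i + j) - 0 = -i - j := by ring
    rw [h3, hφ0, mul_one] at h2
    have hne := hφne (-i - j)
    field_simp at h1 h2 ⊢
    calc φ (i + j) = φ (i + j) * (φ i * φ j * φ (-i - j)) := by rw [h1]; ring
    _ = (φ (i + j) * φ (-i - j)) * (φ i * φ j) := by ring
    _ = φ i * φ j := by rw [mul_comm (φ (i + j)), h2]; ring
  have hφpow : ∀ n : ℕ, φ ((n : ZMod N)) = φ 1 ^ n := by
    intro n
    induction n with
    | zero => simpa using hφ0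
    | succ m ih => push_cast; rw [hφadd, ih, pow_succ]
  have hφval : ∀ k : ZMod N, φ k = φ 1 ^ k.val := by
    intro k
    rw [← hφpow k.val, ZMod.natCast_val, ZMod.cast_id]
  -- φ 1 is an N-th root of unity
  have hroot : φ 1 ^ N = 1 := by
    rw [← hφpow N, ZMod.natCast_self, hφ0]
  have hprim : IsPrimitiveRoot (Complex.exp (2 * Real.pi * Complex.I / N)) N :=
    Complex.isPrimitiveRoot_exp N (NeZero.ne N)
  obtain ⟨m, hmlt, hm⟩ := hprim.eq_pow_of_pow_eq_one hroot
  -- stdAddChar 1 = exp(2πi/N)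
  have hstd1 : stdAddChar (1 : ZMod N) = Complex.exp (2 * Real.pi * Complex.I / N) := by
    have := ZMod.stdAddChar_coe (N := N) 1
    push_cast at this
    rw [this]; norm_num
  -- the shift
  refine ⟨(m : ZMod N), ?_⟩
  have key : dft y' = dft (fun j => y (j + (m : ZMod N))) := by
    funext k
    have hshift : dft (fun j => y (j + (m : ZMod N))) k
        = stdAddChar ((m : ZMod N) * k) * dft y k := by
      rw [dft_apply, dft_apply, Finset.mul_sum]
      refine Fintype.sum_equiv (Equiv.addRight ((m : ZMod N))) _ _ fun j => ?_
      simp only [Equiv.coe_addRight, smul_eq_mul]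
      rw [← mul_assoc, ← AddChar.map_add_eq_mul]
      ring_nf
    rw [hshift]
    have hchar : stdAddChar ((m : ZMod N) * k) = φ k := by
      have h1 : (m : ZMod N) * k = (m * k.val) • (1 : ZMod N) := by
        simp only [nsmul_eq_mul, mul_one]
        push_cast [ZMod.natCast_val, ZMod.cast_id]
        ring
      rw [h1, AddChar.map_nsmul_eq_pow, hstd1, ← pow_one
        (Complex.exp (2 * Real.pi * Complex.I / N)), ← pow_mul, pow_mul', pow_mul, pow_one,
        hm, ← hφval]
    rw [hchar]
    simp only [hφdef]
    exact (div_mul_cancel₀ (dft y' k) (hy k)).symm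
  have : y' = fun j => y (j + (m : ZMod N)) := dft.injective key
  intro j
  have := congrFun this j
  simpa [hydef, hy'def, Complex.ofReal_inj] using this

/-- **The Heisenberg bispectrum determines the magnitudes and Fourier magnitudes, each up
to cyclic shift.** If `ŷ` and `ẑ` (the DFTs of the squared magnitudes and squared Fourier
magnitudes of `x`) are everywhere nonzero, and `x'` has the same modulus and
Fourier-modulus bispectra as `x`, then `|x'_j| = |x_{j+k₀}|` and `|x̂'[k]| = |x̂[k+n₀]|`
for some shifts `k₀, n₀`. -/
theorem heisenberg_bispectrum_separates_up_to_shift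
    {N : ℕ} [NeZero N] (x x' : ZMod N → ℂ)
    (hy : ∀ k : ZMod N, dft (fun t => ((‖x t‖ : ℂ)) ^ 2) k ≠ 0)
    (hz : ∀ k : ZMod N, dft (fun t => ((‖dft x t‖ : ℂ)) ^ 2) k ≠ 0)
    (hBM : ∀ i j : ZMod N, modulusBispectrum x' i j = modulusBispectrum x i j)
    (hBFM : ∀ i j : ZMod N, fourierModulusBispectrum x' i j = fourierModulusBispectrum x i j) :
    ∃ k₀ n₀ : ZMod N,
      (∀ j : ZMod N, ‖x' j‖ = ‖x (j + k₀)‖) ∧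
      (∀ k : ZMod N, ‖dft x' k‖ = ‖dft x (k + n₀)‖) := by
  have habs : ∀ (f : ZMod N → ℂ),
      (fun t => ((‖f t‖ : ℂ)) ^ 2)
        = fun t => (((‖f t‖ ^ 2 : ℝ)) : ℂ) := by
    intro f; funext t; push_cast; ring
  obtain ⟨k₀, hk₀⟩ := bispectrum_shift (fun t => ‖x t‖ ^ 2)
    (fun t => ‖x' t‖ ^ 2) (fun j => sq_nonneg _) (fun j => sq_nonneg _)
    (by rw [← habs]; exact hy)
    (by
      intro i j
      have := hBM i j
      rw [modulusBispectrum, modulusBispectrum, habs x, habs x'] at this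
      exact this)
  obtain ⟨n₀, hn₀⟩ := bispectrum_shift (fun t => ‖dft x t‖ ^ 2)
    (fun t => ‖dft x' t‖ ^ 2) (fun j => sq_nonneg _) (fun j => sq_nonneg _)
    (by rw [← habs]; exact hz)
    (by
      intro i j
      have := hBFM i j
      rw [fourierModulusBispectrum, fourierModulusBispectrum, habs (dft x),
        habs (dft x')] at this
      exact this)
  refine ⟨k₀, n₀, fun j => ?_, fun k => ?_⟩
  · have := hk₀ j
    nlinarith [norm_nonneg (x' j), norm_nonneg (x (j + k₀))]
  · have := hn₀ k
    nlinarith [norm_nonneg (dft x' k), norm_nonneg (dft x (k + n₀))]
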